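/- Let f(1+x) = Σ_{n≥0} a_n x^n ∈ 1 + xF_p[[x]] be an endomorphism of the group of 1-units. Then a_m = 0 if and only if the m-th Hasse derivative D^{(m)}f(1+x) is identically zero. -/

import Mathlib

open PowerSeries

/-- Coefficientwise substitution of a power series `x` with zero constant term into `f`:
`(applySeries f x) = f(x)`, i.e. `Σ aₙ xⁿ`. -/
noncomputable def applySeries {R : Type*} [CommRing R] (f x : PowerSeries R) : PowerSeries R :=
  PowerSeries.mk fun k => ∑ n ∈ Finset.range (k + 1), coeff n f * coeff k (x ^ n)

/-- `f ∈ 1 + x R[[x]]` defines an endomorphism of the group of 1-units: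
`f(1) = 1` and `f(uv) = f(u) f(v)` for all 1-units `u, v`, where `f(u)` means the
substitution of `u - 1` into the series `f`. -/
def IsOneUnitEndo {R : Type*} [CommRing R] (f : PowerSeries R) : Prop :=
  constantCoeff f = 1 ∧
    ∀ u v : PowerSeries R, constantCoeff u = 1 → constantCoeff v = 1 →
      applySeries f (u * v - 1) = applySeries f (u - 1) * applySeries f (v - 1)

/-- The `m`-th Hasse derivative of a power series `Σ aₙ xⁿ`, namely `Σ_{n≥m} C(n,m) aₙ x^{n-m}`. -/
noncomputable def hasseDeriv {R : Type*} [CommRing R] (m : ℕ) (f : PowerSeries R) :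
    PowerSeries R :=
  PowerSeries.mk fun i => ((i + m).choose m : R) * coeff (i + m) f

namespace HasseAux

variable {R : Type*} [CommRing R]

lemma coeff_pow_eq_zero {s : PowerSeries R} (hs : constantCoeff s = 0)
    {j d : ℕ} (hd : d < j) : coeff d (s ^ j) = 0 :=
  PowerSeries.X_pow_dvd_iff.mp (pow_dvd_pow_of_dvd (PowerSeries.X_dvd_iff.mpr hs) j) d hd

lemma coeff_applySeries (f z : PowerSeries R) (k : ℕ) :
    coeff k (applySeries f z) =
      ∑ n ∈ Finset.range (k + 1), coeff n f * coeff k (z ^ n) := by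
  simp [applySeries, coeff_mk]

lemma applySeries_X (f : PowerSeries R) : applySeries f X = f := by
  ext k
  simp [applySeries, coeff_mk, coeff_X_pow, Finset.sum_ite_eq]

lemma coeff_hasse_mul (f s : PowerSeries R) (j k : ℕ) :
    coeff k (hasseDeriv j f * s ^ j) =
      ∑ c ∈ Finset.range (k + 1),
        (((c + j).choose j : R) * coeff (c + j) f) * coeff (k - c) (s ^ j) := by
  rw [coeff_mul, Finset.Nat.sum_antidiagonal_eq_sum_range_succ_mk]
  simp [hasseDeriv, coeff_mk]

lemma coeff_X_add_pow (s : PowerSeries R) {n k : ℕ} (hn : n ≤ k) :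
    coeff k ((X + s) ^ n) =
      ∑ j ∈ Finset.range (k + 1), (n.choose j : R) * coeff (k - (n - j)) (s ^ j) := by
  rw [add_comm (X : PowerSeries R) s, add_pow, map_sum]
  have step : ∀ j ∈ Finset.range (n + 1),
      coeff k (s ^ j * X ^ (n - j) * ((n.choose j : ℕ) : PowerSeries R))
        = (n.choose j : R) * coeff (k - (n - j)) (s ^ j) := by
    intro j hj
    rw [mul_comm (s ^ j * X ^ (n - j)) _, ← map_natCast C (n.choose j),
      coeff_C_mul, coeff_mul_X_pow', if_pos (by omega)]
  rw [Finset.sum_congr rfl step]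
  apply Finset.sum_subset
  · intro x hx
    simp only [Finset.mem_range] at *
    omega
  · intro x _ hx
    simp only [Finset.mem_range] at hx
    rw [Nat.choose_eq_zero_of_lt (by omega)]
    simp

lemma taylor (f s : PowerSeries R) (hs : constantCoeff s = 0) (k : ℕ) :
    coeff k (applySeries f (X + s)) =
      ∑ j ∈ Finset.range (k + 1), coeff k (hasseDeriv j f * s ^ j) := by
  rw [coeff_applySeries]
  have step1 : ∀ n ∈ Finset.range (k + 1),
      coeff n f * coeff k ((X + s) ^ n) =
        ∑ j ∈ Finset.range (k + 1),
          coeff n f * ((n.choose j : R) * coeff (k - (n - j)) (s ^ j)) := by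
    intro n hn
    rw [coeff_X_add_pow s (Finset.mem_range_succ_iff.mp hn), Finset.mul_sum]
  rw [Finset.sum_congr rfl step1, Finset.sum_comm]
  refine Finset.sum_congr rfl fun j hj => ?_
  rw [coeff_hasse_mul]
  have hjk : j ≤ k := Finset.mem_range_succ_iff.mp hj
  -- LHS over n, restrict to n ≥ j, shift n = j + c
  have lhs_eq : ∑ n ∈ Finset.range (k + 1),
      coeff n f * ((n.choose j : R) * coeff (k - (n - j)) (s ^ j)) =
      ∑ n ∈ Finset.Ico j (k + 1),
        coeff n f * ((n.choose j : R) * coeff (k - (n - j)) (s ^ j)) := by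
    rw [Finset.range_eq_Ico, ← Finset.sum_Ico_consecutive _ (Nat.zero_le j) (by omega)]
    have : ∑ n ∈ Finset.Ico 0 j,
        coeff n f * ((n.choose j : R) * coeff (k - (n - j)) (s ^ j)) = 0 := by
      apply Finset.sum_eq_zero
      intro n hn
      simp only [Finset.mem_Ico] at hn
      rw [Nat.choose_eq_zero_of_lt (by omega)]
      simp
    rw [this, zero_add]
  rw [lhs_eq, Finset.sum_Ico_eq_sum_range]
  have rhs_eq : ∑ c ∈ Finset.range (k + 1),
      (((c + j).choose j : R) * coeff (c + j) f) * coeff (k - c) (s ^ j) =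
      ∑ c ∈ Finset.range (k + 1 - j),
        (((c + j).choose j : R) * coeff (c + j) f) * coeff (k - c) (s ^ j) := by
    symm
    apply Finset.sum_subset
    · intro x hx
      simp only [Finset.mem_range] at *
      omega
    · intro x hx hx'
      simp only [Finset.mem_range] at hx hx'
      rw [coeff_pow_eq_zero hs (show k - x < j by omega)]
      simp
  rw [rhs_eq]
  refine Finset.sum_congr rfl fun c hc => ?_
  have h1 : j + c - j = c := by omega
  rw [h1, add_comm j c]
  ring

lemma mul_applySeries (f g t : PowerSeries R) (ht : constantCoeff t = 0) (k : ℕ) :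
    coeff k (g * applySeries f t) =
      ∑ j ∈ Finset.range (k + 1), coeff j f * coeff k (g * t ^ j) := by
  rw [coeff_mul, Finset.Nat.sum_antidiagonal_eq_sum_range_succ_mk]
  have step : ∀ c ∈ Finset.range (k + 1),
      coeff c g * coeff (k - c) (applySeries f t) =
        ∑ j ∈ Finset.range (k + 1),
          coeff j f * (coeff c g * coeff (k - c) (t ^ j)) := by
    intro c hc
    rw [coeff_applySeries, Finset.mul_sum]
    have ext_eq : ∑ n ∈ Finset.range (k - c + 1),
          coeff c g * (coeff n f * coeff (k - c) (t ^ n)) =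
        ∑ n ∈ Finset.range (k + 1),
          coeff c g * (coeff n f * coeff (k - c) (t ^ n)) := by
      apply Finset.sum_subset
      · intro x hx
        simp only [Finset.mem_range] at *
        omega
      · intro x hx hx'
        simp only [Finset.mem_range] at hx hx'
        rw [coeff_pow_eq_zero ht (show k - c < x by omega)]
        simp
    rw [ext_eq]
    refine Finset.sum_congr rfl fun n _ => ?_
    ring
  rw [Finset.sum_congr rfl step, Finset.sum_comm]
  refine Finset.sum_congr rfl fun j _ => ?_
  rw [coeff_mul, Finset.Nat.sum_antidiagonal_eq_sum_range_succ_mk, Finset.mul_sum]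

lemma key_relation (f : PowerSeries R) (hf : IsOneUnitEndo f) (j : ℕ) :
    hasseDeriv j f * (1 + X) ^ j = C (coeff j f) * f := by
  set G : ℕ → PowerSeries R :=
    fun j => hasseDeriv j f * (1 + X) ^ j - C (coeff j f) * f with hGdef
  suffices h : ∀ j, G j = 0 by
    have := h j
    rw [hGdef] at this
    simpa [sub_eq_zero] using this
  have main : ∀ t : PowerSeries R, constantCoeff t = 0 → ∀ k : ℕ,
      ∑ j ∈ Finset.range (k + 1), coeff k (G j * t ^ j) = 0 := by
    intro t ht k
    have hs : constantCoeff (t * (1 + X)) = 0 := by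
      simp [ht]
    have e1 : applySeries f (X + t * (1 + X)) = f * applySeries f t := by
      have h2 := hf.2 (1 + X) (1 + t) (by simp) (by simp [ht])
      have e3 : ((1 : PowerSeries R) + X) * (1 + t) - 1 = X + t * (1 + X) := by ring
      have e4 : ((1 : PowerSeries R) + X) - 1 = X := by ring
      have e5 : ((1 : PowerSeries R) + t) - 1 = t := by ring
      rw [e3, e4, e5, applySeries_X] at h2
      exact h2
    have expand : ∀ j, G j * t ^ j =
        hasseDeriv j f * (t * (1 + X)) ^ j - C (coeff j f) * (f * t ^ j) := by
      intro j
      rw [hGdef, mul_pow]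
      ring
    calc ∑ j ∈ Finset.range (k + 1), coeff k (G j * t ^ j)
        = ∑ j ∈ Finset.range (k + 1), (coeff k (hasseDeriv j f * (t * (1 + X)) ^ j)
            - coeff j f * coeff k (f * t ^ j)) := by
          refine Finset.sum_congr rfl fun j _ => ?_
          rw [expand j, map_sub, coeff_C_mul]
      _ = coeff k (applySeries f (X + t * (1 + X))) - coeff k (f * applySeries f t) := by
          rw [Finset.sum_sub_distrib, taylor f _ hs k, mul_applySeries f f t ht k]
      _ = 0 := by rw [e1, sub_self]
  intro j
  induction j using Nat.strong_induction_on with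
  | _ j ih =>
    ext i
    have hk := main (X ^ (i + 1)) (by simp) (i + (i + 1) * j)
    have hjmem : j ∈ Finset.range (i + (i + 1) * j + 1) := by
      have : j ≤ (i + 1) * j := Nat.le_mul_of_pos_left j (by omega)
      simp only [Finset.mem_range]
      omega
    rw [Finset.sum_eq_single_of_mem j hjmem] at hk
    · rw [← pow_mul, coeff_mul_X_pow', if_pos (by omega)] at hk
      have : i + (i + 1) * j - (i + 1) * j = i := by omega
      rw [this] at hk
      simpa using hk
    · intro j' hj' hne
      rw [← pow_mul, coeff_mul_X_pow']
      rcases lt_or_gt_of_ne hne with hlt | hgt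
      · rw [ih j' hlt]
        simp
      · rw [if_neg]
        have : (i + 1) * (j + 1) ≤ (i + 1) * j' := Nat.mul_le_mul_left _ (by omega)
        have h2 : (i + 1) * (j + 1) = (i + 1) * j + (i + 1) := by ring
        omega

end HasseAux

theorem coeff_eq_zero_iff_hasseDeriv_eq_zero {p : ℕ} [Fact p.Prime]
    (f : PowerSeries (ZMod p)) (hf : IsOneUnitEndo f) (m : ℕ) :
    coeff m f = 0 ↔ hasseDeriv m f = 0 := by
  have key := HasseAux.key_relation f hf m
  constructor
  · intro h
    rw [h, map_zero, zero_mul] at key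
    rcases mul_eq_zero.mp key with h1 | h2
    · exact h1
    · exfalso
      have hne : ((1 : PowerSeries (ZMod p)) + X) ≠ 0 := by
        intro h0
        have := congrArg (constantCoeff) h0
        simp at this
      exact pow_ne_zero m hne h2
  · intro h
    have h0 := congrArg (coeff 0) h
    simpa [hasseDeriv, coeff_mk] using h0
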